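/- arXiv:1912.03925 — 4 statements merged into one kernel-verified Lean document; each statement's English description precedes it below -/
import Mathlib

section
/- Let F : ℝ^K → [0,∞) be differentiable, t_n ∈ ℕ, L_n > 0, and R > 0. Assume ‖∇F(a)‖_∞ ≤ L_n·R for all a with ‖a‖_∞ ≤ 2R, and ‖∇F(a₁) − ∇F(a₂)‖ ≤ L_n·‖a₁ − a₂‖ for all a₁, a₂ with ‖a₁‖_∞ ≤ 3R and ‖a₂‖_∞ ≤ 3R. Let a^{(0)} satisfy ‖a^{(0)}‖ ≤ R and √(2·t_n·F(a^{(0)})/L_n) ≤ R, and set a^{(t+1)} = a^{(t)} − (1/L_n)·∇F(a^{(t)}) for t = 0,…,t_n−1. Then ‖a^{(t)}‖_∞ ≤ 2R for all t ∈ {0,1,…,t_n}. -/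
open scoped RealInnerProductSpace

lemma descent {K : ℕ} (F : EuclideanSpace ℝ (Fin K) → ℝ) (hF : Differentiable ℝ F)
    (L : ℝ) (x v : EuclideanSpace ℝ (Fin K))
    (hLip : ∀ s₁ ∈ Set.Icc (0:ℝ) 1, ∀ s₂ ∈ Set.Icc (0:ℝ) 1,
      ‖gradient F (x + s₁ • v) - gradient F (x + s₂ • v)‖ ≤ L * |s₁ - s₂| * ‖v‖) :
    F (x + v) ≤ F x + ⟪gradient F x, v⟫ + L / 2 * ‖v‖ ^ 2 := by
  set φ : ℝ → ℝ := fun s => ⟪gradient F (x + s • v), v⟫ with hφ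
  have hderiv : ∀ s : ℝ, HasDerivAt (fun s : ℝ => F (x + s • v)) (φ s) s := by
    intro s
    have h1 : HasDerivAt (fun s : ℝ => x + s • v) v s := by
      simpa using ((hasDerivAt_id s).smul_const v).const_add x
    have h3 := (hF (x + s • v)).hasFDerivAt.comp_hasDerivAt s h1
    convert h3 using 1
    show ⟪gradient F (x + s • v), v⟫ = _
    rw [gradient, ← InnerProductSpace.toDual_apply_apply, LinearIsometryEquiv.apply_symm_apply]
    all_goals rfl
  -- continuity of φ on [0,1]
  have hgcont : ContinuousOn (fun s : ℝ => gradient F (x + s • v)) (Set.Icc 0 1) := by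
    have : LipschitzOnWith (Real.toNNReal (max L 0 * ‖v‖))
        (fun s : ℝ => gradient F (x + s • v)) (Set.Icc 0 1) := by
      apply LipschitzOnWith.of_dist_le_mul
      intro s₁ hs₁ s₂ hs₂
      rw [dist_eq_norm]
      calc ‖gradient F (x + s₁ • v) - gradient F (x + s₂ • v)‖
          ≤ L * |s₁ - s₂| * ‖v‖ := hLip s₁ hs₁ s₂ hs₂
        _ ≤ max L 0 * |s₁ - s₂| * ‖v‖ := by
            apply mul_le_mul_of_nonneg_right _ (norm_nonneg v)
            exact mul_le_mul_of_nonneg_right (le_max_left L 0) (abs_nonneg _)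
        _ = Real.toNNReal (max L 0 * ‖v‖) * dist s₁ s₂ := by
            rw [Real.coe_toNNReal _ (by positivity), Real.dist_eq]; ring
    exact this.continuousOn
  have hφcont : ContinuousOn φ (Set.Icc 0 1) := hgcont.inner continuousOn_const
  have hInt : IntervalIntegrable φ MeasureTheory.volume 0 1 :=
    hφcont.intervalIntegrable_of_Icc zero_le_one
  have hFTC : ∫ s in (0:ℝ)..1, φ s = F (x + v) - F x := by
    have := intervalIntegral.integral_eq_sub_of_hasDerivAt
      (f := fun s : ℝ => F (x + s • v)) (fun s _ => hderiv s) hInt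
    simpa using this
  have hbound : ∀ s ∈ Set.Icc (0:ℝ) 1, φ s ≤ ⟪gradient F x, v⟫ + L * ‖v‖ ^ 2 * s := by
    intro s hs
    have h0 : (0:ℝ) ∈ Set.Icc (0:ℝ) 1 := by constructor <;> norm_num
    have hl := hLip s hs 0 h0
    rw [zero_smul, add_zero, sub_zero] at hl
    have : φ s - ⟪gradient F x, v⟫ = ⟪gradient F (x + s • v) - gradient F x, v⟫ := by
      rw [hφ, inner_sub_left]
    have h2 : ⟪gradient F (x + s • v) - gradient F x, v⟫ ≤ L * ‖v‖ ^ 2 * s := by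
      calc ⟪gradient F (x + s • v) - gradient F x, v⟫
          ≤ ‖gradient F (x + s • v) - gradient F x‖ * ‖v‖ := real_inner_le_norm _ _
        _ ≤ (L * |s| * ‖v‖) * ‖v‖ := mul_le_mul_of_nonneg_right hl (norm_nonneg v)
        _ = L * ‖v‖ ^ 2 * s := by rw [abs_of_nonneg hs.1]; ring
    linarith
  have hmono : ∫ s in (0:ℝ)..1, φ s ≤
      ∫ s in (0:ℝ)..1, (⟪gradient F x, v⟫ + L * ‖v‖ ^ 2 * s) := by
    apply intervalIntegral.integral_mono_on zero_le_one hInt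
    · exact (Continuous.intervalIntegrable (by fun_prop) 0 1)
    · exact hbound
  have hval : ∫ s in (0:ℝ)..1, (⟪gradient F x, v⟫ + L * ‖v‖ ^ 2 * s)
      = ⟪gradient F x, v⟫ + L / 2 * ‖v‖ ^ 2 := by
    have h2 : IntervalIntegrable (fun s : ℝ => L * ‖v‖ ^ 2 * s) MeasureTheory.volume 0 1 :=
      Continuous.intervalIntegrable (by fun_prop) 0 1
    rw [intervalIntegral.integral_add intervalIntegrable_const h2,
      intervalIntegral.integral_const, intervalIntegral.integral_const_mul, integral_id]
    norm_num
    ring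
  linarith [hFTC ▸ hmono]

/-- Sup norm of a Euclidean vector, viewed coordinatewise. -/
noncomputable def supNorm {K : ℕ} (a : EuclideanSpace ℝ (Fin K)) : ℝ :=
  ‖(WithLp.equiv 2 (Fin K → ℝ)) a‖

lemma supNorm_le_norm {K : ℕ} (a : EuclideanSpace ℝ (Fin K)) : supNorm a ≤ ‖a‖ := by
  have := (PiLp.lipschitzWith_ofLp 2 (fun _ : Fin K => ℝ)).dist_le_mul a 0
  simpa [supNorm, dist_zero_right] using this

lemma supNorm_add_le {K : ℕ} (x y : EuclideanSpace ℝ (Fin K)) :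
    supNorm (x + y) ≤ supNorm x + supNorm y := by
  simpa [supNorm] using norm_add_le ((WithLp.equiv 2 (Fin K → ℝ)) x) ((WithLp.equiv 2 (Fin K → ℝ)) y)

lemma supNorm_smul {K : ℕ} (c : ℝ) (x : EuclideanSpace ℝ (Fin K)) :
    supNorm (c • x) = |c| * supNorm x := by
  simp [supNorm, norm_smul]

lemma supNorm_nonneg {K : ℕ} (x : EuclideanSpace ℝ (Fin K)) : 0 ≤ supNorm x :=
  norm_nonneg _

lemma supNorm_neg {K : ℕ} (x : EuclideanSpace ℝ (Fin K)) : supNorm (-x) = supNorm x := by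
  simp [supNorm]

/-- Gradient-descent iterates with step size `1/Lₙ` stay bounded (Lemma 4). -/
theorem stmt_2 {K : ℕ} (F : EuclideanSpace ℝ (Fin K) → ℝ) (hF : Differentiable ℝ F)
    (hFpos : ∀ x, 0 ≤ F x)
    (tn : ℕ) (Ln R : ℝ) (hLn : 0 < Ln) (hR : 0 < R)
    (hgradBound : ∀ a : EuclideanSpace ℝ (Fin K), supNorm a ≤ 2 * R →
      supNorm (gradient F a) ≤ Ln * R)
    (hgradLip : ∀ a₁ a₂ : EuclideanSpace ℝ (Fin K),
      supNorm a₁ ≤ 3 * R → supNorm a₂ ≤ 3 * R →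
      ‖gradient F a₁ - gradient F a₂‖ ≤ Ln * ‖a₁ - a₂‖)
    (a : ℕ → EuclideanSpace ℝ (Fin K))
    (ha0 : ‖a 0‖ ≤ R)
    (ha0' : Real.sqrt (2 * tn * F (a 0) / Ln) ≤ R)
    (hrec : ∀ t < tn, a (t + 1) = a t - (1 / Ln) • gradient F (a t)) :
    ∀ t ≤ tn, supNorm (a t) ≤ 2 * R := by
  set g : ℕ → EuclideanSpace ℝ (Fin K) := fun t => gradient F (a t) with hg
  have key : ∀ t, t ≤ tn →
      (supNorm (a t) ≤ 2 * R ∧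
       F (a t) + (1 / (2 * Ln)) * ∑ s ∈ Finset.range t, ‖g s‖ ^ 2 ≤ F (a 0) ∧
       a t = a 0 - (1 / Ln) • ∑ s ∈ Finset.range t, g s) := by
    intro t
    induction t with
    | zero =>
      intro _
      refine ⟨?_, by simp, by simp⟩
      calc supNorm (a 0) ≤ ‖a 0‖ := supNorm_le_norm _
        _ ≤ R := ha0
        _ ≤ 2 * R := by linarith
    | succ t ih =>
      intro ht1
      have htn : t < tn := ht1
      obtain ⟨h2R, hPot, hSum⟩ := ih (le_of_lt htn)
      set v : EuclideanSpace ℝ (Fin K) := -((1 / Ln) • g t) with hv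
      have hstep : a (t + 1) = a t + v := by
        rw [hrec t htn, hv, hg, sub_eq_add_neg]
      have hgB : supNorm (g t) ≤ Ln * R := hgradBound _ h2R
      have hsv : supNorm v = (1 / Ln) * supNorm (g t) := by
        rw [hv, supNorm_neg, supNorm_smul, abs_of_pos (by positivity)]
      have hseg : ∀ s ∈ Set.Icc (0:ℝ) 1, supNorm (a t + s • v) ≤ 3 * R := by
        intro s hs
        have h1 : supNorm (s • v) ≤ R := by
          rw [supNorm_smul, hsv, abs_of_nonneg hs.1]
          calc s * ((1 / Ln) * supNorm (g t)) ≤ 1 * ((1 / Ln) * (Ln * R)) := by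
                apply mul_le_mul hs.2 _ (mul_nonneg (by positivity) (supNorm_nonneg _)) zero_le_one
                exact mul_le_mul_of_nonneg_left hgB (by positivity)
            _ = R := by field_simp
        calc supNorm (a t + s • v) ≤ supNorm (a t) + supNorm (s • v) := supNorm_add_le _ _
          _ ≤ 2 * R + R := add_le_add h2R h1
          _ = 3 * R := by ring
      have hLip : ∀ s₁ ∈ Set.Icc (0:ℝ) 1, ∀ s₂ ∈ Set.Icc (0:ℝ) 1,
          ‖gradient F (a t + s₁ • v) - gradient F (a t + s₂ • v)‖ ≤ Ln * |s₁ - s₂| * ‖v‖ := by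
        intro s₁ hs₁ s₂ hs₂
        have h := hgradLip _ _ (hseg s₁ hs₁) (hseg s₂ hs₂)
        have heq : (a t + s₁ • v) - (a t + s₂ • v) = (s₁ - s₂) • v := by
          rw [sub_smul]; abel
        rw [heq, norm_smul, Real.norm_eq_abs] at h
        calc ‖gradient F (a t + s₁ • v) - gradient F (a t + s₂ • v)‖
            ≤ Ln * (|s₁ - s₂| * ‖v‖) := h
          _ = Ln * |s₁ - s₂| * ‖v‖ := by ring
      have hdes := descent F hF Ln (a t) v hLip
      have hinner : ⟪gradient F (a t), v⟫ = -((1 / Ln) * ‖g t‖ ^ 2) := by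
        show (⟪g t, v⟫ : ℝ) = _
        rw [hv, inner_neg_right, real_inner_smul_right, real_inner_self_eq_norm_sq]
      have hnv : ‖v‖ ^ 2 = (1 / Ln) ^ 2 * ‖g t‖ ^ 2 := by
        rw [hv, norm_neg, norm_smul, Real.norm_eq_abs, abs_of_pos (by positivity), mul_pow]
      have hdec : F (a (t + 1)) ≤ F (a t) - 1 / (2 * Ln) * ‖g t‖ ^ 2 := by
        rw [hstep]
        rw [hinner, hnv] at hdes
        have hLnne : Ln ≠ 0 := ne_of_gt hLn
        have : -((1 / Ln) * ‖g t‖ ^ 2) + Ln / 2 * ((1 / Ln) ^ 2 * ‖g t‖ ^ 2)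
            = -(1 / (2 * Ln) * ‖g t‖ ^ 2) := by field_simp; ring
        linarith
      have hPot' : F (a (t + 1)) + (1 / (2 * Ln)) * ∑ s ∈ Finset.range (t + 1), ‖g s‖ ^ 2
          ≤ F (a 0) := by
        rw [Finset.sum_range_succ, mul_add]
        linarith
      have hSum' : a (t + 1) = a 0 - (1 / Ln) • ∑ s ∈ Finset.range (t + 1), g s := by
        rw [hstep, hSum, Finset.sum_range_succ, smul_add, hv]
        abel
      have hG : ∑ s ∈ Finset.range (t + 1), ‖g s‖ ^ 2 ≤ 2 * Ln * F (a 0) := by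
        have h0 := hFpos (a (t + 1))
        have h1 : (1 / (2 * Ln)) * ∑ s ∈ Finset.range (t + 1), ‖g s‖ ^ 2 ≤ F (a 0) := by
          linarith
        calc ∑ s ∈ Finset.range (t + 1), ‖g s‖ ^ 2
            = (2 * Ln) * ((1 / (2 * Ln)) * ∑ s ∈ Finset.range (t + 1), ‖g s‖ ^ 2) := by
              field_simp
          _ ≤ (2 * Ln) * F (a 0) := by
              exact mul_le_mul_of_nonneg_left h1 (by positivity)
          _ = 2 * Ln * F (a 0) := by ring
      have hCS : ‖∑ s ∈ Finset.range (t + 1), g s‖ ^ 2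
          ≤ (t + 1 : ℝ) * ∑ s ∈ Finset.range (t + 1), ‖g s‖ ^ 2 := by
        have h1 : ‖∑ s ∈ Finset.range (t + 1), g s‖ ≤ ∑ s ∈ Finset.range (t + 1), ‖g s‖ :=
          norm_sum_le _ _
        have h2 : (∑ s ∈ Finset.range (t + 1), ‖g s‖) ^ 2
            ≤ (t + 1 : ℝ) * ∑ s ∈ Finset.range (t + 1), ‖g s‖ ^ 2 := by
          have := sq_sum_le_card_mul_sum_sq (s := Finset.range (t + 1))
            (f := fun s => ‖g s‖)
          simpa using this
        calc ‖∑ s ∈ Finset.range (t + 1), g s‖ ^ 2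
            ≤ (∑ s ∈ Finset.range (t + 1), ‖g s‖) ^ 2 :=
              pow_le_pow_left₀ (norm_nonneg _) h1 2
          _ ≤ _ := h2
      have hdist : ‖a (t + 1) - a 0‖ ^ 2 ≤ 2 * (t + 1 : ℝ) * F (a 0) / Ln := by
        have he : a (t + 1) - a 0 = -((1 / Ln) • ∑ s ∈ Finset.range (t + 1), g s) := by
          rw [hSum']; abel
        rw [he, norm_neg, norm_smul, Real.norm_eq_abs, abs_of_pos (by positivity), mul_pow]
        calc (1 / Ln) ^ 2 * ‖∑ s ∈ Finset.range (t + 1), g s‖ ^ 2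
            ≤ (1 / Ln) ^ 2 * ((t + 1 : ℝ) * (2 * Ln * F (a 0))) := by
              apply mul_le_mul_of_nonneg_left _ (by positivity)
              calc ‖∑ s ∈ Finset.range (t + 1), g s‖ ^ 2
                  ≤ (t + 1 : ℝ) * ∑ s ∈ Finset.range (t + 1), ‖g s‖ ^ 2 := hCS
                _ ≤ (t + 1 : ℝ) * (2 * Ln * F (a 0)) :=
                    mul_le_mul_of_nonneg_left hG (by positivity)
          _ = 2 * (t + 1 : ℝ) * F (a 0) / Ln := by field_simp
      have hR2 : 2 * (t + 1 : ℝ) * F (a 0) / Ln ≤ R ^ 2 := by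
        have hc : ((t : ℝ) + 1) ≤ (tn : ℝ) := by exact_mod_cast ht1
        have h1 : 2 * (t + 1 : ℝ) * F (a 0) / Ln ≤ 2 * (tn : ℝ) * F (a 0) / Ln := by
          gcongr
          exact hFpos _
        have hnn : 0 ≤ 2 * (tn : ℝ) * F (a 0) / Ln := by
          have := hFpos (a 0); positivity
        have h2 : 2 * (tn : ℝ) * F (a 0) / Ln ≤ R ^ 2 := by
          calc 2 * (tn : ℝ) * F (a 0) / Ln
              = (Real.sqrt (2 * tn * F (a 0) / Ln)) ^ 2 := (Real.sq_sqrt hnn).symm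
            _ ≤ R ^ 2 := pow_le_pow_left₀ (Real.sqrt_nonneg _) ha0' 2
        linarith
      have hnorm1 : ‖a (t + 1) - a 0‖ ≤ R := by
        have h := Real.sqrt_le_sqrt (hdist.trans hR2)
        rwa [Real.sqrt_sq (norm_nonneg _), Real.sqrt_sq hR.le] at h
      refine ⟨?_, hPot', hSum'⟩
      calc supNorm (a (t + 1)) ≤ ‖a (t + 1)‖ := supNorm_le_norm _
        _ = ‖a 0 + (a (t + 1) - a 0)‖ := by congr 1; abel
        _ ≤ ‖a 0‖ + ‖a (t + 1) - a 0‖ := norm_add_le _ _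
        _ ≤ R + R := add_le_add ha0 hnorm1
        _ = 2 * R := by ring
  intro t ht
  exact (key t ht).1
end

section
/- Let σ be the logistic squasher and let f_c, f_{c̄} be deep feedforward networks with L hidden layers of width k₀ each, built recursively via f_{k,i}^{(r)}(x) = σ(Σ_{j=1}^{k₀} c_{k,i,j}^{(r−1)} f_{k,j}^{(r−1)}(x) + c_{k,i,0}^{(r−1)}) from weights c and c̄ respectively. Then for any k and any x ∈ ℝ^d: |f_{k,k}^{(L)}(x) − f̄_{k,k}^{(L)}(x)| ≤ (2k₀+1)^L · (max{‖c‖_∞, ‖x‖_∞, 1})^L · max_{i,j,s: s<L} |c_{k,i,j}^{(s)} − c̄_{k,i,j}^{(s)}|. -/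
/-- The logistic squasher. -/
noncomputable def logistic (x : ℝ) : ℝ := 1 / (1 + Real.exp (-x))

/-- A fully connected feedforward logistic network with `d` inputs and hidden
layers of width `k₀`:  `net d k₀ w w0 c c0 (r-1) i x` is the output `f_i^{(r)}(x)`
of the `i`-th neuron in layer `r`, where `w, w0` are the first-layer weights
(`c^{(0)}`) and `c r, c0 r` are the weights `c^{(r)}` feeding layer `r+1`. -/
noncomputable def net (d k₀ : ℕ) (w : Fin k₀ → Fin d → ℝ) (w0 : Fin k₀ → ℝ)
    (c : ℕ → Fin k₀ → Fin k₀ → ℝ) (c0 : ℕ → Fin k₀ → ℝ) :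
    ℕ → Fin k₀ → (Fin d → ℝ) → ℝ
  | 0, i, x => logistic (∑ j, w i j * x j + w0 i)
  | (r + 1), i, x =>
      logistic (∑ j, c (r + 1) i j * net d k₀ w w0 c c0 r j x + c0 (r + 1) i)

lemma logistic_nonneg (y : ℝ) : 0 ≤ logistic y := by
  unfold logistic; positivity

lemma logistic_le_one (y : ℝ) : logistic y ≤ 1 := by
  unfold logistic
  rw [div_le_one (by positivity)]
  linarith [Real.exp_pos (-y)]

lemma logistic_abs_le_one (y : ℝ) : |logistic y| ≤ 1 :=
  abs_le.2 ⟨by linarith [logistic_nonneg y], logistic_le_one y⟩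

lemma logistic_hasDeriv (y : ℝ) :
    HasDerivAt logistic (Real.exp (-y) / (1 + Real.exp (-y))^2) y := by
  have hpos : (0:ℝ) < 1 + Real.exp (-y) := by positivity
  have h1 : HasDerivAt (fun x : ℝ => -x) (-1) y := (hasDerivAt_id y).neg
  have h2 : HasDerivAt (fun x : ℝ => Real.exp (-x)) (Real.exp (-y) * (-1)) y :=
    (Real.hasDerivAt_exp (-y)).comp y h1
  have h3 : HasDerivAt (fun x : ℝ => 1 + Real.exp (-x)) (Real.exp (-y) * (-1)) y :=
    h2.const_add 1
  have h4 := h3.inv (ne_of_gt hpos)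
  have : logistic = fun x : ℝ => (1 + Real.exp (-x))⁻¹ := by
    funext z; simp [logistic, one_div]
  rw [this]
  exact h4.congr_deriv (by ring)

lemma logistic_lip (a b : ℝ) : |logistic a - logistic b| ≤ (1/4) * |a - b| := by
  have key := Convex.norm_image_sub_le_of_norm_hasDerivWithin_le
    (f := logistic) (f' := fun y => Real.exp (-y) / (1 + Real.exp (-y))^2)
    (C := 1/4)
    (fun y _ => (logistic_hasDeriv y).hasDerivWithinAt)
    (fun y _ => by
      have hpos : (0:ℝ) < Real.exp (-y) := Real.exp_pos _
      simp only [Real.norm_eq_abs]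
      rw [abs_of_nonneg (by positivity)]
      rw [div_le_iff₀ (by positivity)]
      nlinarith [sq_nonneg (1 - Real.exp (-y))])
    convex_univ (Set.mem_univ b) (Set.mem_univ a)
  simpa [Real.norm_eq_abs] using key

lemma net_abs_le_one (d k₀ : ℕ) (w : Fin k₀ → Fin d → ℝ) (w0 : Fin k₀ → ℝ)
    (c : ℕ → Fin k₀ → Fin k₀ → ℝ) (c0 : ℕ → Fin k₀ → ℝ) (r : ℕ) (i : Fin k₀)
    (x : Fin d → ℝ) : |net d k₀ w w0 c c0 r i x| ≤ 1 := by
  cases r with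
  | zero => exact logistic_abs_le_one _
  | succ r => exact logistic_abs_le_one _

set_option maxHeartbeats 1000000 in
/-- Lemma 5 a): Lipschitz dependence of a deep logistic network on its
weights.  `C` bounds the sup norm of the weights and `M` bounds the sup norm
of the difference of the two weight vectors. -/
theorem stmt_7 (d k₀ L : ℕ) (hL : 1 ≤ L) (hk₀ : d ≤ 2 * k₀)
    (w wbar : Fin k₀ → Fin d → ℝ) (w0 w0bar : Fin k₀ → ℝ)
    (c cbar : ℕ → Fin k₀ → Fin k₀ → ℝ) (c0 c0bar : ℕ → Fin k₀ → ℝ)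
    (C M : ℝ)
    (hCw : ∀ i j, |w i j| ≤ C) (hCw0 : ∀ i, |w0 i| ≤ C)
    (hCc : ∀ r, 1 ≤ r → r ≤ L - 1 → ∀ i j, |c r i j| ≤ C)
    (hCc0 : ∀ r, 1 ≤ r → r ≤ L - 1 → ∀ i, |c0 r i| ≤ C)
    (hMw : ∀ i j, |w i j - wbar i j| ≤ M) (hMw0 : ∀ i, |w0 i - w0bar i| ≤ M)
    (hMc : ∀ r, 1 ≤ r → r ≤ L - 1 → ∀ i j, |c r i j - cbar r i j| ≤ M)
    (hMc0 : ∀ r, 1 ≤ r → r ≤ L - 1 → ∀ i, |c0 r i - c0bar r i| ≤ M)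
    (k : Fin k₀) (x : Fin d → ℝ) :
    |net d k₀ w w0 c c0 (L - 1) k x - net d k₀ wbar w0bar cbar c0bar (L - 1) k x|
      ≤ (2 * k₀ + 1) ^ L * (max (max C ‖x‖) 1) ^ L * M := by
  set B := max (max C ‖x‖) 1 with hB
  have hB1 : (1:ℝ) ≤ B := le_max_right _ _
  have hB0 : (0:ℝ) ≤ B := by linarith
  have hBC : C ≤ B := le_trans (le_max_left _ _) (le_max_left _ _)
  have hBx : ‖x‖ ≤ B := le_trans (le_max_right _ _) (le_max_left _ _)
  have hM : 0 ≤ M := le_trans (abs_nonneg _) (hMw0 k)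
  have hk0 : (0:ℝ) ≤ (k₀:ℝ) := Nat.cast_nonneg _
  have key : ∀ r, r ≤ L - 1 → ∀ i : Fin k₀,
      |net d k₀ w w0 c c0 r i x - net d k₀ wbar w0bar cbar c0bar r i x|
        ≤ (2 * (k₀:ℝ) + 1) ^ (r+1) * B ^ (r+1) * M := by
    intro r
    induction r with
    | zero =>
      intro _ i
      show |logistic (∑ j, w i j * x j + w0 i) -
            logistic (∑ j, wbar i j * x j + w0bar i)| ≤ _
      have hsum : (∑ j, (w i j - wbar i j) * x j)
          = (∑ j, w i j * x j) - ∑ j, wbar i j * x j := by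
        rw [← Finset.sum_sub_distrib]
        exact Finset.sum_congr rfl fun j _ => (sub_mul _ _ _)
      have h1 : (∑ j, w i j * x j) + w0 i - ((∑ j, wbar i j * x j) + w0bar i)
          = (∑ j, (w i j - wbar i j) * x j) + (w0 i - w0bar i) := by
        rw [hsum]; ring
      have h2 : |(∑ j, (w i j - wbar i j) * x j) + (w0 i - w0bar i)|
          ≤ (d:ℝ) * (M * B) + M := by
        refine le_trans (abs_add_le _ _) (add_le_add ?_ (hMw0 i))
        refine le_trans (Finset.abs_sum_le_sum_abs _ _) ?_
        have hterm : ∀ j ∈ Finset.univ,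
            |(w i j - wbar i j) * x j| ≤ M * B := by
          intro j _
          rw [abs_mul]
          exact mul_le_mul (hMw i j) (le_trans (by
            simpa [Real.norm_eq_abs] using norm_le_pi_norm x j) hBx)
            (abs_nonneg _) hM
        refine le_trans (Finset.sum_le_sum hterm) ?_
        rw [Finset.sum_const, Finset.card_univ, Fintype.card_fin, nsmul_eq_mul]
      refine le_trans (logistic_lip _ _) ?_
      rw [h1]
      have hd : (d:ℝ) ≤ 2 * (k₀:ℝ) := by exact_mod_cast hk₀
      have hdn : (0:ℝ) ≤ (d:ℝ) := Nat.cast_nonneg _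
      have hfin : (1/4 : ℝ) * ((d:ℝ) * (M * B) + M)
          ≤ (2 * (k₀:ℝ) + 1) ^ (0+1) * B ^ (0+1) * M := by
        simp only [zero_add, pow_one]
        nlinarith [mul_nonneg hM hB0, mul_nonneg hdn (mul_nonneg hM hB0),
          mul_nonneg hdn hM]
      exact le_trans (by linarith [h2]) hfin
    | succ r ih =>
      intro hr i
      have hr' : r ≤ L - 1 := le_trans (Nat.le_succ r) hr
      have h1r : 1 ≤ r + 1 := Nat.succ_le_succ (Nat.zero_le r)
      set F : Fin k₀ → ℝ := fun j => net d k₀ w w0 c c0 r j x with hF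
      set G : Fin k₀ → ℝ := fun j => net d k₀ wbar w0bar cbar c0bar r j x with hG
      set A : ℝ := (2 * (k₀:ℝ) + 1) ^ (r+1) * B ^ (r+1) * M with hA
      have hA0 : 0 ≤ A := by positivity
      show |logistic (∑ j, c (r+1) i j * F j + c0 (r+1) i) -
            logistic (∑ j, cbar (r+1) i j * G j + c0bar (r+1) i)| ≤ _
      have hsum : (∑ j, (c (r+1) i j * (F j - G j)
            + (c (r+1) i j - cbar (r+1) i j) * G j))
          = (∑ j, c (r+1) i j * F j) - ∑ j, cbar (r+1) i j * G j := by
        rw [← Finset.sum_sub_distrib]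
        exact Finset.sum_congr rfl fun j _ => by ring
      have h1 : (∑ j, c (r+1) i j * F j) + c0 (r+1) i -
            ((∑ j, cbar (r+1) i j * G j) + c0bar (r+1) i)
          = (∑ j, (c (r+1) i j * (F j - G j)
              + (c (r+1) i j - cbar (r+1) i j) * G j))
            + (c0 (r+1) i - c0bar (r+1) i) := by
        rw [hsum]; ring
      have h2 : |(∑ j, (c (r+1) i j * (F j - G j)
            + (c (r+1) i j - cbar (r+1) i j) * G j))
            + (c0 (r+1) i - c0bar (r+1) i)| ≤ (k₀:ℝ) * (C * A + M) + M := by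
        refine le_trans (abs_add_le _ _) (add_le_add ?_ (hMc0 (r+1) h1r hr i))
        refine le_trans (Finset.abs_sum_le_sum_abs _ _) ?_
        have hterm : ∀ j ∈ Finset.univ,
            |c (r+1) i j * (F j - G j) + (c (r+1) i j - cbar (r+1) i j) * G j|
              ≤ C * A + M := by
          intro j _
          refine le_trans (abs_add_le _ _) (add_le_add ?_ ?_)
          · rw [abs_mul]
            exact mul_le_mul (hCc (r+1) h1r hr i j) (ih hr' j) (abs_nonneg _)
              (le_trans (abs_nonneg _) (hCc (r+1) h1r hr i j))
          · rw [abs_mul]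
            calc |c (r+1) i j - cbar (r+1) i j| * |G j|
                ≤ M * 1 := mul_le_mul (hMc (r+1) h1r hr i j)
                  (net_abs_le_one _ _ _ _ _ _ _ _ _) (abs_nonneg _) hM
              _ = M := mul_one M
        refine le_trans (Finset.sum_le_sum hterm) ?_
        rw [Finset.sum_const, Finset.card_univ, Fintype.card_fin, nsmul_eq_mul]
      have h3 : (1/4) * ((k₀:ℝ) * (C * A + M) + M)
          ≤ (2 * (k₀:ℝ) + 1) ^ (r+1+1) * B ^ (r+1+1) * M := by
        have hC0 : 0 ≤ C := le_trans (abs_nonneg _) (hCw0 i)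
        set P : ℝ := (2 * (k₀:ℝ) + 1) ^ (r+1) with hP
        set Q : ℝ := B ^ (r+1) with hQ
        have hP1 : (1:ℝ) ≤ P := one_le_pow₀ (by linarith)
        have hQ1 : (1:ℝ) ≤ Q := one_le_pow₀ hB1
        have hPQ : (1:ℝ) ≤ P * Q :=
          le_trans hP1 (le_mul_of_one_le_right (by linarith) hQ1)
        have hPQB : (1:ℝ) ≤ P * Q * B :=
          le_trans hPQ (le_mul_of_one_le_right (by linarith) hB1)
        have hrw1 : (2 * (k₀:ℝ) + 1) ^ (r+1+1) = P * (2 * (k₀:ℝ) + 1) := pow_succ _ _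
        have hrw2 : B ^ (r+1+1) = Q * B := pow_succ _ _
        rw [hrw1, hrw2, hA]
        have hPQM : (0:ℝ) ≤ P * Q * M := by positivity
        have h4 : C * (P * Q * M) ≤ B * (P * Q * M) :=
          mul_le_mul_of_nonneg_right hBC hPQM
        have h5 : M ≤ P * Q * B * M := by
          simpa using le_mul_of_one_le_left hM hPQB
        nlinarith [mul_le_mul_of_nonneg_left h4 hk0,
          mul_le_mul_of_nonneg_left h5 hk0, mul_nonneg hk0 hM,
          mul_nonneg (mul_nonneg hk0 hB0) hPQM]
      refine le_trans (logistic_lip _ _) ?_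
      rw [h1]
      exact le_trans (by linarith [h2]) h3
  have hfin := key (L-1) le_rfl k
  have hL' : L - 1 + 1 = L := Nat.succ_pred_eq_of_pos hL
  rw [hL'] at hfin
  exact_mod_cast hfin
end

section
/- Let n ∈ ℕ, (x₁,y₁),…,(x_n,y_n) ∈ ℝ^d × ℝ, f : ℝ^d → ℝ, κ > 0, and suppose (1/n)Σᵢ|f(xᵢ)−yᵢ|² ≤ min_{g:ℝ^d→ℝ} (1/n)Σᵢ|g(xᵢ)−yᵢ|² + κ. Define m̄(x) = (Σᵢ yᵢ·1_{xᵢ=x})/(Σᵢ 1_{xᵢ=x}) with convention 0/0 = 0. Then |f(xᵢ) − m̄(xᵢ)| ≤ √(n·κ) for every i ∈ {1,…,n}. -/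
/-- The empirical conditional mean `m̄` of the data (with the convention 0/0 = 0,
which is automatic for real division). -/
noncomputable def empMean {n d : ℕ} (x : Fin n → Fin d → ℝ) (y : Fin n → ℝ)
    (z : Fin d → ℝ) : ℝ :=
  (∑ i, if x i = z then y i else 0) / (∑ i, if x i = z then (1:ℝ) else 0)

lemma empMean_cross {n d : ℕ} (x : Fin n → Fin d → ℝ) (y : Fin n → ℝ)
    (c : (Fin d → ℝ) → ℝ) :
    ∑ i, c (x i) * (empMean x y (x i) - y i) = 0 := by
  classical
  rw [← Finset.sum_fiberwise_of_maps_to (g := x) (t := Finset.image x Finset.univ)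
      (fun i _ => Finset.mem_image_of_mem x (Finset.mem_univ i))]
  apply Finset.sum_eq_zero
  intro z hz
  have hcount : (∑ i, if x i = z then (1:ℝ) else 0)
      = (Finset.univ.filter fun i => x i = z).card := by
    rw [← Finset.sum_filter]
    simp
  have hcard : 0 < (Finset.univ.filter fun i => x i = z).card := by
    obtain ⟨i, _, hi⟩ := Finset.mem_image.mp hz
    exact Finset.card_pos.mpr ⟨i, by simp [hi]⟩
  have hmz : empMean x y z * (Finset.univ.filter fun i => x i = z).card
      = ∑ i ∈ Finset.univ.filter fun i => x i = z, y i := by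
    have hne : ((Finset.univ.filter fun i => x i = z).card : ℝ) ≠ 0 := by
      exact_mod_cast hcard.ne'
    rw [empMean, hcount, div_mul_cancel₀ _ hne, Finset.sum_filter]
  calc ∑ i ∈ Finset.univ.filter fun i => x i = z, c (x i) * (empMean x y (x i) - y i)
      = ∑ i ∈ Finset.univ.filter fun i => x i = z, c z * (empMean x y z - y i) := by
        apply Finset.sum_congr rfl
        intro i hi
        rw [(Finset.mem_filter.mp hi).2]
    _ = c z * ((empMean x y z * (Finset.univ.filter fun i => x i = z).card)
          - ∑ i ∈ Finset.univ.filter fun i => x i = z, y i) := by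
        rw [← Finset.mul_sum, Finset.sum_sub_distrib, Finset.sum_const, nsmul_eq_mul]; ring
    _ = 0 := by rw [hmz]; ring

/-- Lemma 9: a near-minimizer of the empirical L₂ risk is pointwise close to
the empirical conditional mean at each data point. -/
theorem stmt_10 (n d : ℕ) (x : Fin n → Fin d → ℝ) (y : Fin n → ℝ)
    (f : (Fin d → ℝ) → ℝ) (κ : ℝ) (hκ : 0 < κ)
    (hf : ∀ g : (Fin d → ℝ) → ℝ,
      (1 / n) * ∑ i, |f (x i) - y i| ^ 2
        ≤ (1 / n) * ∑ i, |g (x i) - y i| ^ 2 + κ) :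
    ∀ i, |f (x i) - empMean x y (x i)| ≤ Real.sqrt (n * κ) := by
  intro i
  have hn : 0 < (n : ℝ) := by
    have := i.pos
    exact_mod_cast this
  have hg := hf (empMean x y)
  -- multiply through by n
  have h1 : ∑ j, |f (x j) - y j| ^ 2 ≤ ∑ j, |empMean x y (x j) - y j| ^ 2 + n * κ := by
    have := mul_le_mul_of_nonneg_left hg hn.le
    rw [mul_add, ← mul_assoc, ← mul_assoc, mul_one_div_cancel hn.ne', one_mul, one_mul] at this
    linarith
  have hcross := empMean_cross x y (fun z => f z - empMean x y z)
  have hdecomp : ∑ j, |f (x j) - y j| ^ 2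
      = ∑ j, (f (x j) - empMean x y (x j)) ^ 2
        + ∑ j, |empMean x y (x j) - y j| ^ 2 := by
    have : ∀ j : Fin n, |f (x j) - y j| ^ 2
        = (f (x j) - empMean x y (x j)) ^ 2
          + 2 * ((f (x j) - empMean x y (x j)) * (empMean x y (x j) - y j))
          + |empMean x y (x j) - y j| ^ 2 := by
      intro j
      rw [sq_abs, sq_abs]
      ring
    rw [Finset.sum_congr rfl (fun j _ => this j)]
    rw [Finset.sum_add_distrib, Finset.sum_add_distrib, ← Finset.mul_sum, hcross]
    ring
  have h2 : ∑ j, (f (x j) - empMean x y (x j)) ^ 2 ≤ n * κ := by linarith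
  have h3 : (f (x i) - empMean x y (x i)) ^ 2 ≤ n * κ := by
    refine le_trans ?_ h2
    exact Finset.single_le_sum (f := fun j => (f (x j) - empMean x y (x j)) ^ 2) (fun j _ => sq_nonneg _) (Finset.mem_univ i)
  exact Real.abs_le_sqrt h3
end

section
/- Let X₁,…,X_n be i.i.d. with P[X = x_k] = 1/n for k = 1,…,n, where x₁,…,x_n are distinct points. Then Σ_{k=1}^n (1/n)·E[ 1/N_k · 1_{N_k > 0} ] ≥ (n/(n+1))·(1 − ((2n+1)/n)·(1 − 1/n)^n), where N_k = Σ_{i=1}^n 1_{X_i = x_k}. In particular this is at least (10/11)·(1 − (21/10)·(1/e)) for n ≥ 10. -/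
open scoped Classical

open MeasureTheory ProbabilityTheory

open Finset in
lemma expect_eq_binom {Ω α : Type*} [MeasurableSpace Ω] [MeasurableSpace α]
    [MeasurableSingletonClass α]
    (P : Measure Ω) [IsProbabilityMeasure P] (n : ℕ) (hn : 1 ≤ n)
    (x : Fin n → α)
    (X : Fin n → Ω → α) (hXm : ∀ i, Measurable (X i))
    (hindep : iIndepFun X P)
    (hdist : ∀ i k, P {ω | X i ω = x k} = (n : ENNReal)⁻¹)
    (g : ℕ → ℝ) (k : Fin n) :
    ∫ ω, g (∑ i, if X i ω = x k then 1 else 0 : ℕ) ∂P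
      = ∑ j ∈ Finset.range (n + 1),
          (n.choose j : ℝ) * ((1 / n : ℝ) ^ j * (1 - 1 / n) ^ (n - j) * g j) := by
  classical
  set p : ENNReal := (n : ENNReal)⁻¹ with hp
  have hn0 : (0 : ℝ) < n := by exact_mod_cast hn.trans_lt' (by norm_num)
  have hsing : MeasurableSet ({x k} : Set α) := measurableSet_singleton _
  set A : Fin n → Set Ω := fun i => X i ⁻¹' {x k} with hA
  have hAm : ∀ i, MeasurableSet (A i) := fun i => (hXm i) hsing
  have hPA : ∀ i, P (A i) = p := by
    intro i
    have : A i = {ω | X i ω = x k} := by ext ω; simp [hA]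
    rw [this, hdist i k]
  have hple : p ≤ 1 := by
    have h1 : (1 : ENNReal) ≤ (n : ENNReal) := by exact_mod_cast hn
    rw [hp]
    simpa using ENNReal.inv_le_one.mpr h1
  set E : Finset (Fin n) → Set Ω := fun S => ⋂ i, if i ∈ S then A i else (A i)ᶜ with hE
  have hEm : ∀ S, MeasurableSet (E S) := by
    intro S
    refine MeasurableSet.iInter fun i => ?_
    by_cases h : i ∈ S <;> simp [h, hAm i, (hAm i).compl]
  have hPE : ∀ S : Finset (Fin n), P (E S) = p ^ S.card * (1 - p) ^ (n - S.card) := by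
    intro S
    have hcomap : ∀ i, MeasurableSet[MeasurableSpace.comap (X i) inferInstance] (A i) :=
      fun i => ⟨{x k}, hsing, rfl⟩
    have hmi : ∀ i, MeasurableSet[MeasurableSpace.comap (X i) inferInstance]
        (if i ∈ S then A i else (A i)ᶜ) := by
      intro i
      by_cases h : i ∈ S
      · simpa [h] using hcomap i
      · simpa [h] using (hcomap i).compl
    rw [hE]
    rw [hindep.meas_iInter hmi]
    have hfac : ∀ i : Fin n, P (if i ∈ S then A i else (A i)ᶜ) =
        (if i ∈ S then p else 1 - p) := by
      intro i
      by_cases h : i ∈ S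
      · simp [h, hPA i]
      · simp [h, prob_compl_eq_one_sub (hAm i), hPA i]
    rw [Finset.prod_congr rfl fun i _ => hfac i]
    rw [Finset.prod_ite, Finset.prod_const, Finset.prod_const]
    congr 1
    · congr 1
      simp [Finset.filter_mem_eq_inter]
    · congr 1
      have : Finset.filter (fun i => ¬ i ∈ S) Finset.univ = Sᶜ := by
        ext i; simp
      rw [this, Finset.card_compl, Fintype.card_fin]
  -- pointwise decomposition
  have hpt : ∀ ω, g (∑ i, if X i ω = x k then 1 else 0 : ℕ)
      = ∑ S : Finset (Fin n), Set.indicator (E S) (fun _ => g S.card) ω := by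
    intro ω
    set S₀ : Finset (Fin n) := Finset.univ.filter (fun i => X i ω = x k) with hS₀
    have hmem : ∀ S : Finset (Fin n), ω ∈ E S ↔ S = S₀ := by
      intro S
      simp only [hE, Set.mem_iInter]
      constructor
      · intro h
        ext i
        have := h i
        by_cases hi : i ∈ S
        · simp [hi] at this ⊢
          simp [hS₀, hA, Set.mem_preimage] at this ⊢
          exact this
        · simp [hi] at this ⊢
          simp [hS₀, hA, Set.mem_preimage] at this ⊢
          exact this
      · rintro rfl i
        by_cases hi : i ∈ S₀
        · have : X i ω = x k := by simpa [hS₀] using hi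
          simp [hi, hA, this]
        · have : ¬ X i ω = x k := by simpa [hS₀] using hi
          simp [hi, hA, this]
    have hNcard : (∑ i, if X i ω = x k then 1 else 0 : ℕ) = S₀.card := by
      rw [hS₀, Finset.card_filter]
    rw [Finset.sum_eq_single S₀]
    · rw [Set.indicator_of_mem ((hmem S₀).2 rfl), hNcard]
    · intro S _ hS
      exact Set.indicator_of_notMem (fun h => hS ((hmem S).1 h)) _
    · intro h; exact absurd (Finset.mem_univ _) h
  -- integrate
  have hint : ∫ ω, g (∑ i, if X i ω = x k then 1 else 0 : ℕ) ∂P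
      = ∑ S : Finset (Fin n), (P (E S)).toReal * g S.card := by
    rw [integral_congr_ae (Filter.Eventually.of_forall hpt),
      integral_finset_sum _ (fun S _ => (integrable_const _).indicator (hEm S))]
    refine Finset.sum_congr rfl fun S _ => ?_
    rw [integral_indicator_const _ (hEm S), smul_eq_mul]; rfl
  rw [hint]
  have htr : ∀ S : Finset (Fin n), (P (E S)).toReal
      = (1 / n : ℝ) ^ S.card * (1 - 1 / n) ^ (n - S.card) := by
    intro S
    rw [hPE S, ENNReal.toReal_mul, ENNReal.toReal_pow, ENNReal.toReal_pow]
    congr 2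
    · rw [hp, ENNReal.toReal_inv]; simp
    · rw [ENNReal.toReal_sub_of_le hple (by simp), hp, ENNReal.toReal_inv]; simp
  calc ∑ S : Finset (Fin n), (P (E S)).toReal * g S.card
      = ∑ S ∈ (Finset.univ : Finset (Fin n)).powerset,
          ((1 / n : ℝ) ^ S.card * (1 - 1 / n) ^ (n - S.card) * g S.card) := by
        rw [Finset.powerset_univ]
        exact Finset.sum_congr rfl fun S _ => by rw [htr S]
    _ = ∑ j ∈ Finset.range (n + 1),
          (n.choose j : ℝ) * ((1 / n : ℝ) ^ j * (1 - 1 / n) ^ (n - j) * g j) := by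
        rw [Finset.sum_powerset]
        rw [Finset.card_univ, Fintype.card_fin]
        refine Finset.sum_congr rfl fun j _ => ?_
        rw [Finset.sum_powersetCard j Finset.univ
          (fun m => (1 / n : ℝ) ^ m * (1 - 1 / n) ^ (n - m) * g m)]
        rw [Finset.card_univ, Fintype.card_fin, nsmul_eq_mul]

lemma binom_sum_inv_succ (n : ℕ) (hn : 1 ≤ n) :
    ∑ j ∈ Finset.range (n + 1), (n.choose j : ℝ) *
        ((1/n)^j * (1-1/n)^(n-j) * (1/(j+1)))
      = ((n:ℝ)/(n+1)) * (1 - (1-1/n)^(n+1)) := by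
  have hn0 : (0:ℝ) < n := by exact_mod_cast hn.trans_lt' (by norm_num)
  set p : ℝ := 1/n with hp
  set q : ℝ := 1 - 1/n with hq
  have hpq : p + q = 1 := by rw [hp, hq]; ring
  have key : ((n:ℝ)+1) * p * (∑ j ∈ Finset.range (n + 1), (n.choose j : ℝ) *
      (p^j * q^(n-j) * (1/(j+1)))) = 1 - q^(n+1) := by
    rw [Finset.mul_sum]
    have hterm : ∀ j ∈ Finset.range (n+1), ((n:ℝ)+1) * p * ((n.choose j : ℝ) *
        (p^j * q^(n-j) * (1/(j+1))))
        = ((n+1).choose (j+1) : ℝ) * (p^(j+1) * q^((n+1)-(j+1))) := by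
      intro j hj
      have hjn : j ≤ n := Nat.lt_succ_iff.mp (Finset.mem_range.mp hj)
      have hch : ((n:ℝ)+1) * (n.choose j : ℝ) = ((n+1).choose (j+1) : ℝ) * ((j:ℝ)+1) := by
        exact_mod_cast congrArg (Nat.cast : ℕ → ℝ) (Nat.add_one_mul_choose_eq n j)
      have hsub : (n+1) - (j+1) = n - j := by omega
      rw [hsub]
      have e1 : ((n:ℝ)+1) * p * ((n.choose j : ℝ) * (p^j * q^(n-j) * (1/((j:ℝ)+1))))
          = (((n:ℝ)+1) * (n.choose j : ℝ)) * ((1:ℝ)/((j:ℝ)+1)) * (p^(j+1) * q^(n-j)) := by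
        ring
      rw [e1, hch]
      have e2 : (((n+1).choose (j+1) : ℝ) * ((j:ℝ)+1)) * ((1:ℝ)/((j:ℝ)+1))
          = ((n+1).choose (j+1) : ℝ) := by
        have hj1 : ((j:ℝ)+1) ≠ 0 := by positivity
        field_simp
      rw [e2]
    rw [Finset.sum_congr rfl hterm]
    have hbin : ∑ j ∈ Finset.range (n + 2), ((n+1).choose j : ℝ) * (p^j * q^((n+1)-j))
        = (p + q)^(n+1) := by
      rw [add_pow]
      exact Finset.sum_congr rfl fun j _ => by ring
    rw [hpq, one_pow] at hbin
    have := Finset.sum_range_succ' (fun j => ((n+1).choose j : ℝ) * (p^j * q^((n+1)-j))) (n+1)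
    rw [hbin] at this
    simp only [Nat.choose_zero_right, Nat.cast_one, pow_zero, Nat.sub_zero, one_mul] at this
    linarith [this]
  have hnp : ((n:ℝ)+1) * p = (n+1)/n := by rw [hp]; ring
  rw [hnp] at key
  have h2 : ((n:ℝ)+1)/n ≠ 0 := by positivity
  field_simp at key ⊢
  linarith [key]

lemma binom_bound (n : ℕ) (hn : 10 ≤ n) :
    ∑ j ∈ Finset.range (n + 1), (n.choose j : ℝ) *
        ((1/n)^j * (1-1/n)^(n-j) * (if 0 < j then (1:ℝ)/j else 0))
      ≥ ((n:ℝ)/(n+1)) * (1 - ((2*(n:ℝ)+1)/n) * (1-1/n)^n) := by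
  have hn1 : 1 ≤ n := by omega
  have hn0 : (0:ℝ) < n := by exact_mod_cast (by omega : 0 < n)
  set p : ℝ := 1/n with hp
  set q : ℝ := 1 - 1/n with hq
  have hq0 : 0 ≤ q := by
    rw [hq]
    have : (1:ℝ)/n ≤ 1 := by
      rw [div_le_one hn0]; exact_mod_cast hn1
    linarith
  have hp0 : 0 ≤ p := by positivity
  have step1 : ∑ j ∈ Finset.range (n + 1), (n.choose j : ℝ) *
        (p^j * q^(n-j) * (if 0 < j then (1:ℝ)/j else 0))
      ≥ ∑ j ∈ Finset.range (n + 1), (n.choose j : ℝ) *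
        (p^j * q^(n-j) * (if j = 0 then 0 else 1/((j:ℝ)+1))) := by
    refine Finset.sum_le_sum fun j _ => ?_
    have hfac : (0:ℝ) ≤ (n.choose j : ℝ) * (p^j * q^(n-j)) := by positivity
    rcases Nat.eq_zero_or_pos j with hj | hj
    · simp [hj]
    · have h1 : (if j = 0 then (0:ℝ) else 1/((j:ℝ)+1)) = 1/((j:ℝ)+1) := by
        simp [Nat.pos_iff_ne_zero.mp hj]
      have h2 : (if 0 < j then (1:ℝ)/j else 0) = 1/(j:ℝ) := by simp [hj]
      rw [h1, h2]
      have hj0 : (0:ℝ) < j := by exact_mod_cast hj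
      have hle : (1:ℝ)/((j:ℝ)+1) ≤ 1/(j:ℝ) := by
        apply one_div_le_one_div_of_le hj0; linarith
      calc (n.choose j : ℝ) * (p^j * q^(n-j) * (1/((j:ℝ)+1)))
          = (n.choose j : ℝ) * (p^j * q^(n-j)) * (1/((j:ℝ)+1)) := by ring
        _ ≤ (n.choose j : ℝ) * (p^j * q^(n-j)) * (1/(j:ℝ)) :=
            mul_le_mul_of_nonneg_left hle hfac
        _ = (n.choose j : ℝ) * (p^j * q^(n-j) * (1/(j:ℝ))) := by ring
  have step2 : (∑ j ∈ Finset.range (n + 1), (n.choose j : ℝ) *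
        (p^j * q^(n-j) * (1/((j:ℝ)+1))))
      - (∑ j ∈ Finset.range (n + 1), (n.choose j : ℝ) *
        (p^j * q^(n-j) * (if j = 0 then 0 else 1/((j:ℝ)+1)))) = q^n := by
    rw [← Finset.sum_sub_distrib]
    have hdiff : ∀ j ∈ Finset.range (n+1),
        (n.choose j : ℝ) * (p^j * q^(n-j) * (1/((j:ℝ)+1)))
          - (n.choose j : ℝ) * (p^j * q^(n-j) * (if j = 0 then 0 else 1/((j:ℝ)+1)))
        = if j = 0 then q^n else 0 := by
      intro j _
      rcases Nat.eq_zero_or_pos j with hj | hj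
      · subst hj; simp
      · simp [Nat.pos_iff_ne_zero.mp hj]
    rw [Finset.sum_congr rfl hdiff,
      Finset.sum_ite_eq' (Finset.range (n+1)) 0 (fun _ => q^n)]
    simp
  have hS1 := binom_sum_inv_succ n hn1
  rw [← hp, ← hq] at hS1
  have hqn : (0:ℝ) ≤ q^n := by positivity
  have hqsucc : q^(n+1) = q^n * q := pow_succ q n
  have keyeq : ∀ r : ℝ, (n:ℝ)/(n+1)*(1 - r*q) - r
      = (n:ℝ)/(n+1)*(1 - ((2*(n:ℝ)+1)/n)*r) + r * (1/((n:ℝ)+1)) := by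
    intro r
    rw [hq]
    field_simp
    ring
  have hfinal : ((n:ℝ)/(n+1)) * (1 - q^(n+1)) - q^n
      ≥ ((n:ℝ)/(n+1)) * (1 - ((2*(n:ℝ)+1)/n) * q^n) := by
    rw [hqsucc]
    have h1 := keyeq (q^n)
    have h2 : (0:ℝ) ≤ q^n * (1/((n:ℝ)+1)) := by positivity
    linarith
  calc ∑ j ∈ Finset.range (n + 1), (n.choose j : ℝ) *
        (p^j * q^(n-j) * (if 0 < j then (1:ℝ)/j else 0))
      ≥ (∑ j ∈ Finset.range (n + 1), (n.choose j : ℝ) *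
        (p^j * q^(n-j) * (1/((j:ℝ)+1)))) - q^n := by
        have := step1
        linarith [step2]
    _ = ((n:ℝ)/(n+1)) * (1 - q^(n+1)) - q^n := by rw [hS1]
    _ ≥ ((n:ℝ)/(n+1)) * (1 - ((2*(n:ℝ)+1)/n) * q^n) := hfinal

lemma lower2 (n : ℕ) (hn : 10 ≤ n) :
    ((n:ℝ)/(n+1)) * (1 - ((2*(n:ℝ)+1)/n) * (1-1/n)^n)
      ≥ (10/11) * (1 - (21/10) * (1/Real.exp 1)) := by
  have hn0 : (0:ℝ) < n := by exact_mod_cast (by omega : 0 < n)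
  have hnR : (10:ℝ) ≤ n := by exact_mod_cast hn
  have hq0 : (0:ℝ) ≤ 1 - 1/n := by
    have : (1:ℝ)/n ≤ 1 := by rw [div_le_one hn0]; linarith
    linarith
  have hr_le : (1-1/(n:ℝ))^n ≤ 1/Real.exp 1 := by
    have h1 : (1:ℝ) - 1/n ≤ Real.exp (-(1/n)) := by
      have := Real.add_one_le_exp (-(1/(n:ℝ)))
      linarith
    calc (1-1/(n:ℝ))^n ≤ (Real.exp (-(1/n)))^n := pow_le_pow_left₀ hq0 h1 n
      _ = Real.exp ((n:ℕ) * (-(1/n))) := (Real.exp_nat_mul _ n).symm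
      _ = Real.exp (-1) := by
          congr 1
          field_simp
      _ = 1/Real.exp 1 := by rw [Real.exp_neg]; ring
  have hc : (2*(n:ℝ)+1)/n ≤ 21/10 := by
    rw [div_le_iff₀ hn0]; linarith
  have hrpos : (0:ℝ) ≤ (1-1/(n:ℝ))^n := by positivity
  have h1 : (2*(n:ℝ)+1)/n * (1-1/(n:ℝ))^n ≤ (21/10) * (1/Real.exp 1) :=
    mul_le_mul hc hr_le hrpos (by norm_num)
  have he : (2.7:ℝ) < Real.exp 1 := by
    have h := Real.exp_one_gt_d9
    norm_num at h ⊢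
    linarith
  have hb0 : (0:ℝ) ≤ 1 - (21/10)*(1/Real.exp 1) := by
    have h2 : (1:ℝ)/Real.exp 1 < 1/2.7 := by
      exact one_div_lt_one_div_of_lt (by norm_num) he
    nlinarith
  have ha : (10/11:ℝ) ≤ (n:ℝ)/(n+1) := by
    rw [div_le_div_iff₀ (by norm_num) (by positivity)]
    linarith
  exact mul_le_mul ha (by linarith) hb0 (by positivity)

/-- The binomial expectation lower bound used in the proof of Theorem 2:
for i.i.d. `X₁,…,Xₙ` uniform on `n` distinct points `x₁,…,xₙ`,
`Σ_k (1/n)·E[1/N_k · 1_{N_k>0}] ≥ (n/(n+1))·(1 − ((2n+1)/n)(1−1/n)ⁿ)`,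
which is at least `(10/11)·(1 − (21/10)/e)` for `n ≥ 10`.
Here `N_k = Σ_i 1_{X_i = x_k}`. -/
theorem stmt_11 {Ω α : Type*} [MeasurableSpace Ω] [MeasurableSpace α]
    [MeasurableSingletonClass α]
    (P : Measure Ω) [IsProbabilityMeasure P] (n : ℕ) (hn : 10 ≤ n)
    (x : Fin n → α) (hx : Function.Injective x)
    (X : Fin n → Ω → α) (hXm : ∀ i, Measurable (X i))
    (hindep : iIndepFun X P)
    (hdist : ∀ i k, P {ω | X i ω = x k} = (n : ENNReal)⁻¹) :
    (∑ k : Fin n, (1 / n : ℝ) *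
        ∫ ω, (if 0 < (∑ i, if X i ω = x k then 1 else 0 : ℕ) then
            (1 : ℝ) / (∑ i, if X i ω = x k then 1 else 0 : ℕ) else 0) ∂P)
      ≥ ((n : ℝ) / (n + 1)) * (1 - ((2 * n + 1) / n) * (1 - 1 / n) ^ n) ∧
    (∑ k : Fin n, (1 / n : ℝ) *
        ∫ ω, (if 0 < (∑ i, if X i ω = x k then 1 else 0 : ℕ) then
            (1 : ℝ) / (∑ i, if X i ω = x k then 1 else 0 : ℕ) else 0) ∂P)
      ≥ (10 / 11) * (1 - (21 / 10) * (1 / Real.exp 1)) := by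
  have hn1 : 1 ≤ n := by omega
  have hn0 : (0:ℝ) < n := by exact_mod_cast (by omega : 0 < n)
  set L : ℝ := ((n:ℝ)/(n+1)) * (1 - ((2*(n:ℝ)+1)/n) * (1-1/n)^n) with hL
  have hk : ∀ k : Fin n,
      (∫ ω, (if 0 < (∑ i, if X i ω = x k then 1 else 0 : ℕ) then
          (1 : ℝ) / (∑ i, if X i ω = x k then 1 else 0 : ℕ) else 0) ∂P) ≥ L := by
    intro k
    have heq : (∫ ω, (if 0 < (∑ i, if X i ω = x k then 1 else 0 : ℕ) then
          (1 : ℝ) / (∑ i, if X i ω = x k then 1 else 0 : ℕ) else 0) ∂P)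
        = ∑ j ∈ Finset.range (n + 1), (n.choose j : ℝ) *
            ((1 / n : ℝ) ^ j * (1 - 1 / n) ^ (n - j) *
              (if 0 < j then (1:ℝ)/j else 0)) :=
      expect_eq_binom P n hn1 x X hXm hindep hdist
        (fun m => if 0 < m then (1:ℝ)/m else 0) k
    rw [ge_iff_le, heq, hL]
    exact binom_bound n hn
  have hmain : (∑ k : Fin n, (1 / n : ℝ) *
      ∫ ω, (if 0 < (∑ i, if X i ω = x k then 1 else 0 : ℕ) then
          (1 : ℝ) / (∑ i, if X i ω = x k then 1 else 0 : ℕ) else 0) ∂P) ≥ L := by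
    have hsum : (∑ k : Fin n, (1 / n : ℝ) *
        ∫ ω, (if 0 < (∑ i, if X i ω = x k then 1 else 0 : ℕ) then
            (1 : ℝ) / (∑ i, if X i ω = x k then 1 else 0 : ℕ) else 0) ∂P)
        ≥ ∑ _k : Fin n, (1 / n : ℝ) * L :=
      Finset.sum_le_sum fun k _ =>
        mul_le_mul_of_nonneg_left (hk k) (by positivity)
    have hconst : (∑ _k : Fin n, (1 / n : ℝ) * L) = L := by
      rw [Finset.sum_const, Finset.card_univ, Fintype.card_fin, nsmul_eq_mul]
      field_simp
    rw [hconst] at hsum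
    exact hsum
  have hL2 : L ≥ (10 / 11) * (1 - (21 / 10) * (1 / Real.exp 1)) := lower2 n hn
  constructor
  · exact hmain
  · exact le_trans hL2 hmain
end
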